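/- (Mann) Let k ≥ 1, let a₁, …, a_k ∈ ℚ, and let ζ₁, …, ζ_k ∈ ℂ be pairwise distinct roots of unity with Σ_{i=1}^k a_i ζ_i = 0. Suppose this relation is irreducible, i.e., for every nonempty proper subset I ⊊ {1,…,k} one has Σ_{i∈I} a_i ζ_i ≠ 0. Let M be the product of all prime numbers p ≤ k. Then for all i, j ∈ {1,…,k} the ratio ζ_i/ζ_j is an M-th root of unity, i.e. (ζ_i/ζ_j)^M = 1. -/
import Mathlib

open Finset Polynomial

lemma mann_galois_transfer {n : ℕ} (hn : 0 < n) {ξ : ℂ} (hξ : IsPrimitiveRoot ξ n)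
    {k : ℕ} (a : Fin k → ℚ) (e : Fin k → ℕ) (u : ℕ) (hu : Nat.Coprime u n)
    (h : ∑ i, (a i : ℂ) * ξ ^ (e i) = 0) :
    ∑ i, (a i : ℂ) * ξ ^ (u * e i) = 0 := by
  set P : Polynomial ℚ := ∑ i, Polynomial.C (a i) * Polynomial.X ^ (e i) with hP
  have hev : ∀ z : ℂ, Polynomial.aeval z P = ∑ i, (a i : ℂ) * z ^ (e i) := by
    intro z
    rw [hP, map_sum]
    refine Finset.sum_congr rfl fun i _ => ?_
    simp
  have h1 : Polynomial.aeval ξ P = 0 := by rw [hev]; exact h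
  have h2 : minpoly ℚ ξ ∣ P := minpoly.dvd ℚ ξ h1
  rw [← Polynomial.cyclotomic_eq_minpoly_rat hξ hn] at h2
  obtain ⟨Q, hQ⟩ := h2
  have hprim : IsPrimitiveRoot (ξ ^ u) n := hξ.pow_of_coprime u hu
  have h4 : Polynomial.aeval (ξ ^ u) (Polynomial.cyclotomic n ℚ) = 0 := by
    rw [Polynomial.aeval_def, ← Polynomial.eval_map, Polynomial.map_cyclotomic]
    exact hprim.isRoot_cyclotomic hn
  have h5 : Polynomial.aeval (ξ ^ u) P = 0 := by
    rw [hQ, map_mul, h4, zero_mul]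
  rw [hev] at h5
  calc ∑ i, (a i : ℂ) * ξ ^ (u * e i) = ∑ i, (a i : ℂ) * (ξ ^ u) ^ (e i) := by
        refine Finset.sum_congr rfl fun i _ => ?_
        rw [← pow_mul]
    _ = 0 := h5

lemma mann_orth {p : ℕ} (hp : 0 < p) {ω : ℂ} (hω : IsPrimitiveRoot ω p) (c : ℕ) :
    ∑ j ∈ Finset.range p, ω ^ (j * c) = if p ∣ c then (p : ℂ) else 0 := by
  have hrw : ∀ j, ω ^ (j * c) = (ω ^ c) ^ j := fun j => by rw [← pow_mul, Nat.mul_comm]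
  simp_rw [hrw]
  by_cases h : p ∣ c
  · obtain ⟨d, rfl⟩ := h
    have h1 : ω ^ (p * d) = 1 := by rw [pow_mul, hω.pow_eq_one, one_pow]
    simp [h1]
  · have hne : ω ^ c ≠ 1 := fun hh => h ((hω.pow_eq_one_iff_dvd c).mp hh)
    rw [geom_sum_eq hne, ← pow_mul, Nat.mul_comm c p, pow_mul, hω.pow_eq_one, one_pow]
    simp [h]

lemma mann_dvd_shift {p s e : ℕ} (hs : s < p) : p ∣ (p - s + e) ↔ e % p = s := by
  have hmod := Nat.div_add_mod e p
  have hrw : p - s + e = p * (e / p) + (p - s + e % p) := by omega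
  rw [hrw, Nat.dvd_add_right (dvd_mul_right p (e / p))]
  constructor
  · rintro ⟨d, hd⟩
    have hrlt : e % p < p := Nat.mod_lt _ (by omega)
    have hd2 : d < 2 := by
      by_contra hc
      push_neg at hc
      have : p * 2 ≤ p * d := Nat.mul_le_mul_left p hc
      omega
    interval_cases d <;> omega
  · intro h
    exact ⟨1, by omega⟩

lemma mann_aux : ∀ n : ℕ, 0 < n → ∀ {k : ℕ}, 1 ≤ k → ∀ (a : Fin k → ℚ) (η : Fin k → ℂ),
    (∀ i, η i ^ n = 1) → (∃ i0, η i0 = 1) →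
    (∑ i, (a i : ℂ) * η i = 0) →
    (∀ s : Finset (Fin k), s.Nonempty → s ≠ Finset.univ → ∑ i ∈ s, (a i : ℂ) * η i ≠ 0) →
    ∀ i, η i ^ (∏ p ∈ (Finset.range (k + 1)).filter Nat.Prime, p) = 1 := by
  intro n
  induction n using Nat.strong_induction_on with
  | _ n IH =>
  intro hn k hk a η hpow h1 hrel hirr
  by_cases hgood : ∀ q : ℕ, q.Prime → q ∣ n → q ≤ k ∧ ¬ (q * q ∣ n)
  · -- n squarefree with all prime factors ≤ k, so n divides the product
    have hsf : Squarefree n := by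
      rw [Nat.squarefree_iff_prime_squarefree]
      intro q hq hqq
      exact (hgood q hq (dvd_trans (dvd_mul_left q q) hqq)).2 hqq
    have hdvd : n ∣ ∏ p ∈ (Finset.range (k + 1)).filter Nat.Prime, p := by
      rw [← Nat.prod_primeFactors_of_squarefree hsf]
      apply Finset.prod_dvd_prod_of_subset
      intro q hq
      rw [Nat.mem_primeFactors] at hq
      simp only [Finset.mem_filter, Finset.mem_range]
      exact ⟨Nat.lt_succ_of_le ((hgood q hq.1 hq.2.1).1), hq.1⟩
    obtain ⟨c, hc⟩ := hdvd
    intro i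
    rw [hc, pow_mul, hpow i, one_pow]
  · push_neg at hgood
    obtain ⟨p, hp, hpn, hbad⟩ := hgood
    set m := n / p with hm
    have hpm : n = p * m := (Nat.mul_div_cancel' hpn).symm
    have hm0 : 0 < m := Nat.div_pos (Nat.le_of_dvd hn hpn) hp.pos
    set ξ := Complex.exp (2 * Real.pi * Complex.I / n) with hξdef
    have hξ : IsPrimitiveRoot ξ n := Complex.isPrimitiveRoot_exp n hn.ne'
    haveI : NeZero n := ⟨hn.ne'⟩
    have he : ∀ i, ∃ ei : ℕ, ξ ^ ei = η i := by
      intro i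
      obtain ⟨ei, _, hei⟩ := hξ.eq_pow_of_pow_eq_one (hpow i)
      exact ⟨ei, hei⟩
    choose e hee using he
    set ω := ξ ^ m with hωdef
    have hω : IsPrimitiveRoot ω p := hξ.pow hn (by rw [hpm, Nat.mul_comm])
    have hξ0 : ξ ≠ 0 := hξ.ne_zero hn.ne'
    have hrelE : ∑ i, (a i : ℂ) * ξ ^ (e i) = 0 := by
      simp only [hee]; exact hrel
    -- the Galois-conjugated relations
    have hRel : ∀ j : ℕ, ¬ (p ∣ 1 + j * m) →
        ∑ i, (a i : ℂ) * ξ ^ (e i) * ω ^ (j * e i) = 0 := by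
      intro j hj
      have hu : Nat.Coprime (1 + j * m) n := by
        by_contra hg
        obtain ⟨q, hq, hqd⟩ := Nat.exists_prime_and_dvd hg
        have hqu : q ∣ 1 + j * m := dvd_trans hqd (Nat.gcd_dvd_left _ _)
        have hqn : q ∣ n := dvd_trans hqd (Nat.gcd_dvd_right _ _)
        have hqm : q ∣ m := by
          rcases (Nat.Prime.dvd_mul hq).mp (hpm ▸ hqn) with hqp | hqm
          · exact absurd ((Nat.prime_dvd_prime_iff_eq hq hp).mp hqp ▸ hqu) hj
          · exact hqm
        have h2 : q ∣ j * m := Dvd.dvd.mul_left hqm j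
        have h3 := Nat.dvd_sub hqu h2
        rw [Nat.add_sub_cancel] at h3
        exact hq.ne_one (Nat.dvd_one.mp h3)
      have hgt := mann_galois_transfer hn hξ a e (1 + j * m) hu hrelE
      calc ∑ i, (a i : ℂ) * ξ ^ (e i) * ω ^ (j * e i)
          = ∑ i, (a i : ℂ) * ξ ^ ((1 + j * m) * e i) := by
            refine Finset.sum_congr rfl fun i _ => ?_
            rw [hωdef, ← pow_mul, mul_assoc, ← pow_add]
            congr 2
            ring
        _ = 0 := hgt
    -- T s : sum over the residue class s
    set T : ℕ → ℂ := fun s => ∑ i, if e i % p = s then (a i : ℂ) * ξ ^ (e i) else 0 with hT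
    -- key rearrangement: for any J ⊆ range p of "allowed" j's
    have hkey : ∀ (s : ℕ) (J : Finset ℕ), (∀ j ∈ J, ¬ (p ∣ 1 + j * m)) →
        ∑ i, (a i : ℂ) * ξ ^ (e i) * (∑ j ∈ J, ω ^ (j * (p - s + e i))) = 0 := by
      intro s J hJ
      have h0 : ∑ j ∈ J, ω ^ (j * (p - s)) *
          (∑ i, (a i : ℂ) * ξ ^ (e i) * ω ^ (j * e i)) = 0 := by
        apply Finset.sum_eq_zero
        intro j hj
        rw [hRel j (hJ j hj), mul_zero]
      calc ∑ i, (a i : ℂ) * ξ ^ (e i) * (∑ j ∈ J, ω ^ (j * (p - s + e i)))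
          = ∑ i, ∑ j ∈ J, (a i : ℂ) * ξ ^ (e i) * ω ^ (j * (p - s + e i)) := by
            refine Finset.sum_congr rfl fun i _ => ?_
            rw [Finset.mul_sum]
        _ = ∑ j ∈ J, ∑ i, (a i : ℂ) * ξ ^ (e i) * ω ^ (j * (p - s + e i)) :=
            Finset.sum_comm
        _ = ∑ j ∈ J, ω ^ (j * (p - s)) *
            (∑ i, (a i : ℂ) * ξ ^ (e i) * ω ^ (j * e i)) := by
            refine Finset.sum_congr rfl fun j _ => ?_
            rw [Finset.mul_sum]
            refine Finset.sum_congr rfl fun i _ => ?_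
            rw [Nat.mul_add, pow_add]
            ring
        _ = 0 := h0
    have hTval : ∀ s, s < p →
        ∑ i, (a i : ℂ) * ξ ^ (e i) * (if p ∣ (p - s + e i) then (p : ℂ) else 0)
          = (p : ℂ) * T s := by
      intro s hs
      rw [hT, Finset.mul_sum]
      refine Finset.sum_congr rfl fun i _ => ?_
      simp only [mann_dvd_shift hs]
      split_ifs <;> ring
    have hTzero : ∀ s, s < p → T s = 0 := by
      have hpC : (p : ℂ) ≠ 0 := Nat.cast_ne_zero.mpr hp.pos.ne'
      by_cases hpp : p * p ∣ n
      · -- all j are allowed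
        intro s hs
        have hpm' : p ∣ m := by
          have h2 : p * p ∣ p * m := hpm ▸ hpp
          exact (mul_dvd_mul_iff_left hp.pos.ne').mp h2
        have hall : ∀ j ∈ Finset.range p, ¬ (p ∣ 1 + j * m) := by
          intro j _ hdvd
          have h2 : p ∣ j * m := Dvd.dvd.mul_left hpm' j
          have h3 := Nat.dvd_sub hdvd h2
          rw [Nat.add_sub_cancel] at h3
          exact hp.ne_one (Nat.dvd_one.mp h3)
        have := hkey s (Finset.range p) hall
        have heq : ∑ i, (a i : ℂ) * ξ ^ (e i) *
            (∑ j ∈ Finset.range p, ω ^ (j * (p - s + e i))) = (p : ℂ) * T s := by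
          rw [← hTval s hs]
          refine Finset.sum_congr rfl fun i _ => ?_
          rw [mann_orth hp.pos hω (p - s + e i)]
        rw [heq] at this
        exact (mul_eq_zero.mp this).resolve_left hpC
      · -- p exactly divides n, and k < p
        have hkp : k < p := by
          by_contra hc
          push_neg at hc
          exact hpp (hbad hc)
        have hpm' : ¬ p ∣ m := fun hc => hpp (by rw [hpm]; exact mul_dvd_mul_left p hc)
        haveI : Fact p.Prime := ⟨hp⟩
        have hmz : (m : ZMod p) ≠ 0 := fun hc =>
          hpm' ((ZMod.natCast_eq_zero_iff m p).mp hc)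
        set j0 : ℕ := (-(m : ZMod p)⁻¹).val with hj0def
        have hj0lt : j0 < p := ZMod.val_lt _
        have hj0cast : ((j0 : ℕ) : ZMod p) = -(m : ZMod p)⁻¹ := ZMod.natCast_rightInverse _
        have hchar : ∀ j : ℕ, (p ∣ 1 + j * m) ↔ ((j : ZMod p) = -(m : ZMod p)⁻¹) := by
          intro j
          rw [← ZMod.natCast_eq_zero_iff]
          push_cast
          constructor
          · intro h
            have hjm : (j : ZMod p) * m = -1 := by linear_combination h
            calc (j : ZMod p) = ((j : ZMod p) * (m : ZMod p)) * (m : ZMod p)⁻¹ := by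
                  field_simp
              _ = -1 * (m : ZMod p)⁻¹ := by rw [hjm]
              _ = -(m : ZMod p)⁻¹ := by ring
          · intro h
            rw [h]
            have hinv : (m : ZMod p)⁻¹ * m = 1 := inv_mul_cancel₀ hmz
            linear_combination -hinv
        have hforbid : ∀ j ∈ (Finset.range p).erase j0, ¬ (p ∣ 1 + j * m) := by
          intro j hj
          rw [Finset.mem_erase, Finset.mem_range] at hj
          intro hdvd
          have := (hchar j).mp hdvd
          rw [← hj0cast] at this
          exact hj.1 (by
            have := congrArg ZMod.val this
            rwa [ZMod.val_cast_of_lt hj.2, ZMod.val_cast_of_lt hj0lt] at this)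
        -- the W quantity
        set W : ℂ := ∑ i, (a i : ℂ) * ξ ^ (e i) * ω ^ (j0 * e i) with hW
        have hEq : ∀ s, s < p → (p : ℂ) * T s = ω ^ (j0 * (p - s)) * W := by
          intro s hs
          have hk2 := hkey s ((Finset.range p).erase j0) hforbid
          have hsplit : ∀ c : ℕ, ∑ j ∈ (Finset.range p).erase j0, ω ^ (j * c)
              = (if p ∣ c then (p : ℂ) else 0) - ω ^ (j0 * c) := by
            intro c
            have hmem : j0 ∈ Finset.range p := Finset.mem_range.mpr hj0lt
            have := Finset.add_sum_erase (Finset.range p) (fun j => ω ^ (j * c)) hmem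
            rw [mann_orth hp.pos hω c] at this
            linear_combination this
          have hsum2 : ∑ i, ((a i : ℂ) * ξ ^ (e i) * (if p ∣ (p - s + e i) then (p : ℂ) else 0)
              - (a i : ℂ) * ξ ^ (e i) * ω ^ (j0 * (p - s + e i)))
              = ∑ i, (a i : ℂ) * ξ ^ (e i) * (∑ j ∈ (Finset.range p).erase j0,
                  ω ^ (j * (p - s + e i))) := by
            refine Finset.sum_congr rfl fun i _ => ?_
            rw [hsplit (p - s + e i), mul_sub]
          have : ∑ i, ((a i : ℂ) * ξ ^ (e i) * (if p ∣ (p - s + e i) then (p : ℂ) else 0)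
              - (a i : ℂ) * ξ ^ (e i) * ω ^ (j0 * (p - s + e i))) = 0 := hsum2.trans hk2
          rw [Finset.sum_sub_distrib] at this
          rw [hTval s hs] at this
          have h2 : ∑ i, (a i : ℂ) * ξ ^ (e i) * ω ^ (j0 * (p - s + e i))
              = ω ^ (j0 * (p - s)) * W := by
            rw [hW, Finset.mul_sum]
            refine Finset.sum_congr rfl fun i _ => ?_
            rw [Nat.mul_add, pow_add]
            ring
          rw [h2] at this
          linear_combination this
        -- find an empty residue class
        have hex : ∃ s0, s0 < p ∧ ∀ i, e i % p ≠ s0 := by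
          by_contra h
          push_neg at h
          have hsub : Finset.range p ⊆ Finset.image (fun i => e i % p) Finset.univ := by
            intro s hsmem
            rw [Finset.mem_range] at hsmem
            obtain ⟨i, hi⟩ := h s hsmem
            exact Finset.mem_image.mpr ⟨i, Finset.mem_univ i, hi⟩
          have hc1 := Finset.card_le_card hsub
          have hc2 := Finset.card_image_le (s := (Finset.univ : Finset (Fin k)))
            (f := fun i => e i % p)
          simp only [Finset.card_range, Finset.card_univ, Fintype.card_fin] at hc1 hc2
          omega
        obtain ⟨s0, hs0lt, hs0⟩ := hex
        have hTs0 : T s0 = 0 := by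
          rw [hT]
          apply Finset.sum_eq_zero
          intro i _
          rw [if_neg (hs0 i)]
        have hW0 : W = 0 := by
          have := hEq s0 hs0lt
          rw [hTs0, mul_zero] at this
          have hωne : ω ^ (j0 * (p - s0)) ≠ 0 := pow_ne_zero _ (pow_ne_zero _ hξ0)
          exact (mul_eq_zero.mp this.symm).resolve_left hωne
        intro s hs
        have := hEq s hs
        rw [hW0, mul_zero] at this
        exact (mul_eq_zero.mp this).resolve_left hpC
    -- now conclude all e i ≡ 0 mod p
    obtain ⟨i0, hi0⟩ := h1
    have hne0 : n ∣ e i0 := by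
      have h2 : ξ ^ e i0 = 1 := by rw [hee i0, hi0]
      exact (hξ.pow_eq_one_iff_dvd _).mp h2
    have hpe0 : p ∣ e i0 := dvd_trans hpn hne0
    have hr0 : e i0 % p = 0 := by
      obtain ⟨d, hd⟩ := hpe0
      simp [hd, Nat.mul_mod_right]
    have hall0 : ∀ i, e i % p = 0 := by
      by_contra hcon
      push_neg at hcon
      obtain ⟨i1, hi1⟩ := hcon
      set S : Finset (Fin k) := Finset.univ.filter (fun i => e i % p = 0) with hS
      have hSne : S.Nonempty := ⟨i0, by simp [hS, hr0]⟩
      have hSuniv : S ≠ Finset.univ := by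
        intro hcontra
        have : i1 ∈ S := hcontra ▸ Finset.mem_univ i1
        rw [hS, Finset.mem_filter] at this
        exact hi1 this.2
      have hSsum : ∑ i ∈ S, (a i : ℂ) * η i = 0 := by
        have h2 := hTzero 0 hp.pos
        rw [hT] at h2
        rw [hS, Finset.sum_filter]
        simp only [← hee]
        exact h2
      exact hirr S hSne hSuniv hSsum
    have hpowm : ∀ i, η i ^ m = 1 := by
      intro i
      obtain ⟨d, hd⟩ := Nat.dvd_of_mod_eq_zero (hall0 i)
      rw [← hee i, ← pow_mul]
      have hexp : e i * m = n * d := by rw [hd, hpm]; ring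
      rw [hexp, pow_mul, hξ.pow_eq_one, one_pow]
    have hmn : m < n := by
      have h2 : 1 * m < p * m := Nat.mul_lt_mul_of_lt_of_le hp.one_lt (le_refl m) hm0
      rw [one_mul] at h2
      omega
    exact IH m hmn hm0 hk a η hpowm ⟨i0, hi0⟩ hrel hirr

/-- A complex number is a root of unity if some positive power of it equals `1`. -/
def IsRootOfUnity (ζ : ℂ) : Prop := ∃ n : ℕ, 0 < n ∧ ζ ^ n = 1

/-- Mann's theorem: in an irreducible ℚ-relation of length `k` among pairwise distinct
roots of unity, all ratios `ζᵢ/ζⱼ` are `M`-th roots of unity, where `M` is the product of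
the primes `p ≤ k`. -/
theorem stmt_13 (k : ℕ) (hk : 1 ≤ k) (a : Fin k → ℚ) (ζ : Fin k → ℂ)
    (hroot : ∀ i, IsRootOfUnity (ζ i)) (hdist : Function.Injective ζ)
    (hrel : ∑ i, (a i : ℂ) * ζ i = 0)
    (hirr : ∀ s : Finset (Fin k), s.Nonempty → s ≠ Finset.univ →
      ∑ i ∈ s, (a i : ℂ) * ζ i ≠ 0) :
    ∀ i j, (ζ i / ζ j) ^ (∏ p ∈ (Finset.range (k + 1)).filter Nat.Prime, p) = 1 := by
  intro i j
  choose nn hnnpos hnn using hroot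
  have hζne : ∀ l, ζ l ≠ 0 := by
    intro l hl
    have := hnn l
    rw [hl, zero_pow (hnnpos l).ne'] at this
    exact zero_ne_one this
  set N : ℕ := ∏ l, nn l with hN
  have hNpos : 0 < N := Finset.prod_pos (fun l _ => hnnpos l)
  have hζN : ∀ l, ζ l ^ N = 1 := by
    intro l
    obtain ⟨c, hc⟩ := Finset.dvd_prod_of_mem nn (Finset.mem_univ l)
    rw [hN, hc, pow_mul, hnn l, one_pow]
  set η : Fin k → ℂ := fun l => ζ l / ζ j with hη
  have h1 : η j = 1 := div_self (hζne j)
  have hpow : ∀ l, η l ^ N = 1 := by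
    intro l
    rw [hη]
    simp only [div_pow, hζN l, hζN j]
    exact div_self one_ne_zero
  have hterm : ∀ l, (a l : ℂ) * η l = ((a l : ℂ) * ζ l) / ζ j := by
    intro l
    rw [hη, mul_div_assoc]
  have hrel' : ∑ l, (a l : ℂ) * η l = 0 := by
    simp only [hterm]
    rw [← Finset.sum_div, hrel, zero_div]
  have hirr' : ∀ s : Finset (Fin k), s.Nonempty → s ≠ Finset.univ →
      ∑ l ∈ s, (a l : ℂ) * η l ≠ 0 := by
    intro s hs hsu h0
    apply hirr s hs hsu
    simp only [hterm] at h0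
    rw [← Finset.sum_div, _root_.div_eq_zero_iff] at h0
    exact h0.resolve_right (hζne j)
  exact mann_aux N hNpos hk a η hpow ⟨j, h1⟩ hrel' hirr' i
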